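/- If v ≤ Γ on an open ball B with equality on ∂B, where v solves det D²v = g in the Alexandrov sense (Monge–Ampère measure with density g) and Γ is convex continuous, then λ^{2n}(∂Γ(B)) ≤ ∫_B g, i.e. the Lebesgue volume of the subgradient image of Γ over B is bounded by the integral of g over B. -/

import Mathlib

open Set Metric MeasureTheory

namespace Stmt19

/-- The subgradient set of `w` at `x`, relative to the set `S`. -/
def subgradientSet {m : ℕ} (S : Set (EuclideanSpace ℝ (Fin m)))
    (w : EuclideanSpace ℝ (Fin m) → ℝ) (x : EuclideanSpace ℝ (Fin m)) :
    Set (EuclideanSpace ℝ (Fin m)) :=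
  {p | ∀ y ∈ S, w x + (inner ℝ p (y - x) : ℝ) ≤ w y}

/-- The gradient image `∂w(A)`. -/
def gradientImage {m : ℕ} (S : Set (EuclideanSpace ℝ (Fin m)))
    (w : EuclideanSpace ℝ (Fin m) → ℝ) (A : Set (EuclideanSpace ℝ (Fin m))) :
    Set (EuclideanSpace ℝ (Fin m)) :=
  ⋃ x ∈ A, subgradientSet S w x

/-- if `v ≤ Γ` on an open ball `B` with equality on `∂B`, where `v`
solves `det D²v = g` in the Alexandrov sense and `Γ` is convex continuous, then
`λ(∂Γ(B)) ≤ ∫_B g`. -/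
theorem volume_gradientImage_le_integral (m : ℕ)
    (c : EuclideanSpace ℝ (Fin m)) (r : ℝ) (hr : 0 < r)
    (v Γ : EuclideanSpace ℝ (Fin m) → ℝ)
    (hvc : ContinuousOn v (closedBall c r)) (hΓc : ContinuousOn Γ (closedBall c r))
    (hvconv : ConvexOn ℝ (closedBall c r) v) (hΓconv : ConvexOn ℝ (closedBall c r) Γ)
    (hle : ∀ x ∈ ball c r, v x ≤ Γ x)
    (hbdry : ∀ x ∈ sphere c r, v x = Γ x)
    (g : EuclideanSpace ℝ (Fin m) → ℝ) (hg : 0 ≤ g)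
    (hgint : IntegrableOn g (ball c r) volume)
    (halex : ∀ A ⊆ ball c r, MeasurableSet A →
      volume (gradientImage (ball c r) v A) = ∫⁻ x in A, ENNReal.ofReal (g x)) :
    volume (gradientImage (ball c r) Γ (ball c r))
      ≤ ∫⁻ x in ball c r, ENNReal.ofReal (g x) := by
  have key := halex (ball c r) le_rfl measurableSet_ball
  rw [← key]
  apply measure_mono
  -- show ∂Γ(B) ⊆ ∂v(B)
  intro p hp
  simp only [gradientImage, mem_iUnion] at hp ⊢
  obtain ⟨x, hx, hpx⟩ := hp
  -- extend the subgradient inequality for Γ at x to the closed ball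
  have hcl : closure (ball c r) = closedBall c r := closure_ball c hr.ne'
  have hext : ∀ y ∈ closedBall c r, Γ x + (inner ℝ p (y - x) : ℝ) ≤ Γ y := by
    intro y hy
    have h1 : ContinuousOn (fun y => Γ x + (inner ℝ p (y - x) : ℝ))
        (closure (ball c r)) := by
      apply ContinuousOn.add continuousOn_const
      exact (Continuous.inner continuous_const (continuous_id.sub continuous_const)).continuousOn
    have h2 : ContinuousOn Γ (closure (ball c r)) := hcl ▸ hΓc
    exact le_on_closure hpx h1 h2 (hcl ▸ hy)
  -- minimize v(y) - ⟨p,y⟩ on the closed ball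
  have hcomp : IsCompact (closedBall c r) := isCompact_closedBall c r
  have hne : (closedBall c r).Nonempty := ⟨c, mem_closedBall_self hr.le⟩
  have hhc : ContinuousOn (fun y => v y - (inner ℝ p y : ℝ)) (closedBall c r) :=
    hvc.sub (Continuous.inner continuous_const continuous_id).continuousOn
  obtain ⟨y₀, hy₀, hmin⟩ := hcomp.exists_isMinOn hne hhc
  have hxball : x ∈ closedBall c r := ball_subset_closedBall hx
  -- h(x) ≤ h(y) for all y on the sphere
  have hsphere : ∀ y ∈ sphere c r, v x - (inner ℝ p x : ℝ) ≤ v y - (inner ℝ p y : ℝ) := by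
    intro y hy
    have h1 : Γ x + (inner ℝ p (y - x) : ℝ) ≤ Γ y :=
      hext y (sphere_subset_closedBall hy)
    have h2 : v y = Γ y := hbdry y hy
    have h3 : v x ≤ Γ x := hle x hx
    have : (inner ℝ p (y - x) : ℝ) = inner ℝ p y - inner ℝ p x := inner_sub_right p y x
    linarith [h1, h2, h3, this]
  -- get a minimizer in the open ball
  obtain ⟨z, hz, hzmin⟩ : ∃ z ∈ ball c r, ∀ y ∈ ball c r,
      v z - (inner ℝ p z : ℝ) ≤ v y - (inner ℝ p y : ℝ) := by
    rcases (mem_closedBall.mp hy₀).lt_or_eq with h | h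
    · exact ⟨y₀, mem_ball.mpr h, fun y hy => hmin (ball_subset_closedBall hy)⟩
    · refine ⟨x, hx, fun y hy => ?_⟩
      have hy₀s : y₀ ∈ sphere c r := mem_sphere.mpr h
      have := hsphere y₀ hy₀s
      have h5 : v y₀ - (inner ℝ p y₀ : ℝ) ≤ v y - (inner ℝ p y : ℝ) :=
        hmin (ball_subset_closedBall hy)
      linarith
  refine ⟨z, hz, fun y hy => ?_⟩
  have := hzmin y hy
  have : (inner ℝ p (y - z) : ℝ) = inner ℝ p y - inner ℝ p z := inner_sub_right p y z
  linarith [hzmin y hy, this]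

end Stmt19
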